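/- Paths are status unique in the family of all connected graphs: if H is a finite connected graph whose status sequence (multiset of statuses) equals the status sequence of the path P_n, then H is isomorphic to P_n. -/

import Mathlib

/-- The status (transmission index) of a vertex: the sum of distances to all vertices. -/
noncomputable def SimpleGraph.status {V : Type*} [Fintype V] (G : SimpleGraph V) (v : V) : ℕ :=
  ∑ u : V, G.dist v u

/-- The status sequence of a finite graph: the multiset of statuses of its vertices. -/
noncomputable def SimpleGraph.statusSequence {V : Type*} [Fintype V] (G : SimpleGraph V) :
    Multiset ℕ :=
  Finset.univ.val.map G.status

private lemma walk_lip {V : Type*} {G : SimpleGraph V} {g : V → ℕ}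
    (hg : ∀ a b : V, G.Adj a b → g b ≤ g a + 1) {u w : V} (p : G.Walk u w) :
    g w ≤ g u + p.length := by
  induction p with
  | nil => simp
  | cons h q ih =>
      have := hg _ _ h
      simp only [SimpleGraph.Walk.length_cons]
      omega

private lemma dist_le_dist_add_one {V : Type*} {G : SimpleGraph V} (hG : G.Connected)
    {v a b : V} (h : G.Adj a b) : G.dist v b ≤ G.dist v a + 1 := by
  have h3 := hG.dist_triangle (u := v) (v := a) (w := b)
  rwa [SimpleGraph.dist_eq_one_iff_adj.mpr h] at h3

private lemma exists_adj_dist_eq {V : Type*} {G : SimpleGraph V} (hG : G.Connected)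
    {v u : V} {k : ℕ} (h : G.dist v u = k + 1) : ∃ w, G.Adj w u ∧ G.dist v w = k := by
  have h' : G.dist u v = k + 1 := by rw [SimpleGraph.dist_comm]; exact h
  obtain ⟨p, hp⟩ := hG.exists_walk_length_eq_dist u v
  rw [h'] at hp
  cases p with
  | nil => simp at hp
  | @cons _ x _ hadj r =>
      refine ⟨x, hadj.symm, ?_⟩
      simp only [SimpleGraph.Walk.length_cons] at hp
      have h1 : G.dist v x ≤ k := by
        have := SimpleGraph.dist_le r
        rw [SimpleGraph.dist_comm]
        omega
      have h2 : G.dist v u ≤ G.dist v x + 1 := dist_le_dist_add_one hG hadj.symm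
      omega

private lemma exists_dist_eq_of_le {V : Type*} {G : SimpleGraph V} (hG : G.Connected) (v : V) :
    ∀ m (u : V), G.dist v u = m → ∀ k, k ≤ m → ∃ w, G.dist v w = k := by
  intro m
  induction m with
  | zero =>
      intro u _ k hk
      exact ⟨v, by simp [Nat.le_zero.mp hk]⟩
  | succ m ih =>
      intro u hu k hk
      rcases Nat.eq_or_lt_of_le hk with rfl | hlt
      · exact ⟨u, hu⟩
      · obtain ⟨w, _, hw⟩ := exists_adj_dist_eq hG hu
        exact ih w hw k (by omega)

private lemma pathGraph_dist (m : ℕ) (j : Fin (m + 1)) :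
    (SimpleGraph.pathGraph (m + 1)).dist 0 j = j.val := by
  have hupper : ∀ k (hk : k < m + 1),
      (SimpleGraph.pathGraph (m + 1)).dist 0 ⟨k, hk⟩ ≤ k := by
    intro k
    induction k with
    | zero =>
        intro hk
        have : (⟨0, hk⟩ : Fin (m + 1)) = 0 := rfl
        simp [this]
    | succ k ih =>
        intro hk
        have hk' : k < m + 1 := by omega
        have hadj : (SimpleGraph.pathGraph (m + 1)).Adj ⟨k, hk'⟩ ⟨k + 1, hk⟩ := by
          rw [SimpleGraph.pathGraph_adj]; left; rfl
        calc (SimpleGraph.pathGraph (m + 1)).dist 0 ⟨k + 1, hk⟩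
            ≤ (SimpleGraph.pathGraph (m + 1)).dist 0 ⟨k, hk'⟩ + 1 :=
              dist_le_dist_add_one (SimpleGraph.pathGraph_connected m) hadj
          _ ≤ k + 1 := by exact Nat.add_le_add_right (ih hk') 1
  have hlower : (j : ℕ) ≤ (SimpleGraph.pathGraph (m + 1)).dist 0 j := by
    obtain ⟨p, hp⟩ := (SimpleGraph.pathGraph_connected m).exists_walk_length_eq_dist 0 j
    have hg : ∀ a b : Fin (m + 1), (SimpleGraph.pathGraph (m + 1)).Adj a b →
        (b : ℕ) ≤ (a : ℕ) + 1 := by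
      intro a b hab
      rw [SimpleGraph.pathGraph_adj] at hab
      omega
    have := walk_lip hg p
    simpa [hp] using this
  have := hupper j.val j.isLt
  have hj : (⟨j.val, j.isLt⟩ : Fin (m + 1)) = j := rfl
  rw [hj] at this
  omega

/-- Paths are status unique among all connected graphs: a finite connected graph with the
same status sequence (multiset of statuses) as the path `P_n` is isomorphic to `P_n`. -/
theorem path_status_unique {V : Type*} [Fintype V]
    (H : SimpleGraph V) (hH : H.Connected) (n : ℕ)
    (hseq : H.statusSequence = (SimpleGraph.pathGraph n).statusSequence) :
    Nonempty (H ≃g SimpleGraph.pathGraph n) := by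
  classical
  have hcard : Fintype.card V = n := by
    have h := congrArg Multiset.card hseq
    simpa [SimpleGraph.statusSequence, Finset.card_univ] using h
  have hnpos : 0 < n := by
    have : Nonempty V := hH.nonempty
    rw [← hcard]
    exact Fintype.card_pos
  obtain ⟨m, rfl⟩ : ∃ m, n = m + 1 := ⟨n - 1, by omega⟩
  -- the status of the endpoint of the path
  have hstat0 : (SimpleGraph.pathGraph (m + 1)).status 0 = ∑ k ∈ Finset.range (m + 1), k := by
    unfold SimpleGraph.status
    calc ∑ u : Fin (m + 1), (SimpleGraph.pathGraph (m + 1)).dist 0 u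
        = ∑ u : Fin (m + 1), (u : ℕ) :=
          Finset.sum_congr rfl fun j _ => pathGraph_dist m j
      _ = ∑ k ∈ Finset.range (m + 1), k := Fin.sum_univ_eq_sum_range (fun k => k) (m + 1)
  have hmem : (SimpleGraph.pathGraph (m + 1)).status 0 ∈ H.statusSequence := by
    rw [hseq]
    exact Multiset.mem_map_of_mem _ (Finset.mem_univ_val _)
  obtain ⟨v, _, hv⟩ := Multiset.mem_map.mp hmem
  set f : V → ℕ := fun u => H.dist v u with hf
  have hv' : ∑ u : V, f u = ∑ k ∈ Finset.range (m + 1), k := by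
    rw [← hstat0, ← hv]; rfl
  have hfle : ∀ u : V, f u < m + 1 := by
    intro u
    obtain ⟨p, hp, hlen⟩ := hH.exists_path_of_dist v u
    calc f u = p.length := hlen.symm
      _ < Fintype.card V := hp.length_lt
      _ = m + 1 := hcard
  obtain ⟨umax, -, hmax⟩ := Finset.exists_max_image (Finset.univ : Finset V) f
    ⟨v, Finset.mem_univ v⟩
  set e : ℕ := f umax with he
  have hmax' : ∀ u : V, f u ≤ e := fun u => hmax u (Finset.mem_univ u)
  set c : ℕ → ℕ := fun k => (Finset.univ.filter (fun u => f u = k)).card with hc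
  have hmaps : ∀ u ∈ (Finset.univ : Finset V), f u ∈ Finset.range (e + 1) := by
    intro u _
    exact Finset.mem_range.mpr (Nat.lt_succ_of_le (hmax' u))
  have hfib : ∑ k ∈ Finset.range (e + 1), c k = m + 1 := by
    rw [← hcard]
    rw [← Finset.card_univ]
    exact (Finset.card_eq_sum_card_fiberwise hmaps).symm
  have hc1 : ∀ k ∈ Finset.range (e + 1), 1 ≤ c k := by
    intro k hk
    have hkle : k ≤ e := Nat.lt_succ_iff.mp (Finset.mem_range.mp hk)
    obtain ⟨w, hw⟩ := exists_dist_eq_of_le hH v e umax rfl k hkle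
    refine Nat.one_le_iff_ne_zero.mpr ?_
    have : w ∈ Finset.univ.filter (fun u => f u = k) :=
      Finset.mem_filter.mpr ⟨Finset.mem_univ w, hw⟩
    exact Finset.card_ne_zero_of_mem this
  set D : ℕ := ∑ k ∈ Finset.range (e + 1), (c k - 1) with hD
  have h_n : m + 1 = (e + 1) + D := by
    rw [← hfib]
    have : ∀ k ∈ Finset.range (e + 1), c k = 1 + (c k - 1) := by
      intro k hk; have := hc1 k hk; omega
    rw [Finset.sum_congr rfl this, Finset.sum_add_distrib]
    simp [Finset.card_range]
    rfl
  have hsumfib : ∑ k ∈ Finset.range (e + 1), k * c k = ∑ u : V, f u := by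
    rw [← Finset.sum_fiberwise_of_maps_to hmaps f]
    refine Finset.sum_congr rfl fun k hk => ?_
    rw [Finset.sum_congr rfl (fun x hx => (Finset.mem_filter.mp hx).2),
      Finset.sum_const, smul_eq_mul, mul_comm]
  have hA_le : ∑ k ∈ Finset.range (e + 1), k * c k
      ≤ (∑ k ∈ Finset.range (e + 1), k) + e * D := by
    calc ∑ k ∈ Finset.range (e + 1), k * c k
        ≤ ∑ k ∈ Finset.range (e + 1), (k + e * (c k - 1)) := by
          refine Finset.sum_le_sum fun k hk => ?_
          have hkle : k ≤ e := Nat.lt_succ_iff.mp (Finset.mem_range.mp hk)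
          have h1 : 1 ≤ c k := hc1 k hk
          obtain ⟨d, hd⟩ : ∃ d, c k = d + 1 := ⟨c k - 1, by omega⟩
          have h2 : k * d ≤ e * d := Nat.mul_le_mul_right _ hkle
          have h3 : k * (d + 1) = k * d + k := Nat.mul_succ k d
          rw [hd]
          simp only [Nat.add_sub_cancel]
          omega
      _ = (∑ k ∈ Finset.range (e + 1), k) + ∑ k ∈ Finset.range (e + 1), e * (c k - 1) :=
          Finset.sum_add_distrib
      _ = _ := by rw [← Finset.mul_sum]
  have hsplit : (∑ k ∈ Finset.range (e + 1), k) + ∑ k ∈ Finset.Ico (e + 1) (m + 1), k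
      = ∑ k ∈ Finset.range (m + 1), k := by
    rw [Finset.range_eq_Ico, Finset.range_eq_Ico]
    exact Finset.sum_Ico_consecutive _ (Nat.zero_le _) (by have := hfle umax; omega)
  have hIco : D * (e + 1) ≤ ∑ k ∈ Finset.Ico (e + 1) (m + 1), k := by
    have hcard' : (Finset.Ico (e + 1) (m + 1)).card = D := by
      rw [Nat.card_Ico]; omega
    calc D * (e + 1) = (Finset.Ico (e + 1) (m + 1)).card • (e + 1) := by
          rw [hcard', smul_eq_mul]
      _ ≤ _ := Finset.card_nsmul_le_sum _ _ _ (fun x hx => (Finset.mem_Ico.mp hx).1)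
  have hD0 : D = 0 := by
    have hchain : (∑ k ∈ Finset.range (e + 1), k) + D * (e + 1)
        ≤ (∑ k ∈ Finset.range (e + 1), k) + e * D := by
      calc (∑ k ∈ Finset.range (e + 1), k) + D * (e + 1)
          ≤ ∑ k ∈ Finset.range (m + 1), k := by omega
        _ = ∑ k ∈ Finset.range (e + 1), k * c k := by rw [hsumfib, hv']
        _ ≤ _ := hA_le
    have hdist : D * (e + 1) = e * D + D := by ring
    omega
  have hem : e = m := by omega
  have hcone : ∀ k, k < m + 1 → c k = 1 := by
    intro k hk
    have hk' : k ∈ Finset.range (e + 1) := by rw [hem]; exact Finset.mem_range.mpr hk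
    have h0 : c k - 1 = 0 := Finset.sum_eq_zero_iff.mp hD0 k hk'
    have := hc1 k hk'
    omega
  have hinj : Function.Injective f := by
    intro a b hab
    have hk : f a < m + 1 := hfle a
    have h1 : (Finset.univ.filter (fun u => f u = f a)).card ≤ 1 :=
      le_of_eq (hcone (f a) hk)
    exact Finset.card_le_one.mp h1 a
      (Finset.mem_filter.mpr ⟨Finset.mem_univ a, rfl⟩) b
      (Finset.mem_filter.mpr ⟨Finset.mem_univ b, hab.symm⟩)
  set F : V → Fin (m + 1) := fun u => ⟨f u, hfle u⟩ with hF
  have hFinj : Function.Injective F := by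
    intro a b hab
    exact hinj (congrArg Fin.val hab)
  have hFbij : Function.Bijective F := by
    refine (Fintype.bijective_iff_injective_and_card F).mpr ⟨hFinj, ?_⟩
    simp [hcard]
  refine ⟨⟨Equiv.ofBijective F hFbij, @fun a b => ?_⟩⟩
  show (SimpleGraph.pathGraph (m + 1)).Adj (F a) (F b) ↔ H.Adj a b
  rw [SimpleGraph.pathGraph_adj]
  show f a + 1 = f b ∨ f b + 1 = f a ↔ H.Adj a b
  constructor
  · rintro (h | h)
    · obtain ⟨w, hw, hwd⟩ := exists_adj_dist_eq hH (show H.dist v b = f a + 1 from h.symm)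
      have hwa : w = a := hinj hwd
      exact hwa ▸ hw
    · obtain ⟨w, hw, hwd⟩ := exists_adj_dist_eq hH (show H.dist v a = f b + 1 from h.symm)
      have hwb : w = b := hinj hwd
      exact (hwb ▸ hw).symm
  · intro hab
    have h1 : f b ≤ f a + 1 := dist_le_dist_add_one hH hab
    have h2 : f a ≤ f b + 1 := dist_le_dist_add_one hH hab.symm
    have hne : f a ≠ f b := fun h => hab.ne (hinj h)
    omega
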